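/- arXiv:1406.7155 — 2 statements merged into one kernel-verified Lean document; each statement's English description precedes it below -/
import Mathlib

section
/- The mirror shift is not sofic: there is no SFT Y over any finite alphabet and block map f with f(Y) equal to the mirror shift M. -/
open Pointwise

/-- The shift map `σ^v`. -/
def shiftv {A : Type*} (v : ℤ × ℤ) (x : ℤ × ℤ → A) : ℤ × ℤ → A := fun w => x (w + v)

/-- The pattern with domain `D` and values given by `P` occurs in `x` at `v`. -/
def OccursAt {A : Type*} (D : Set (ℤ × ℤ)) (P : ℤ × ℤ → A) (x : ℤ × ℤ → A)
    (v : ℤ × ℤ) : Prop := ∀ w ∈ D, x (v + w) = P w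

/-- The set of configurations avoiding every pattern in `F`
(patterns are pairs: a domain and a value assignment). -/
def XF {A : Type*} (F : Set (Set (ℤ × ℤ) × ((ℤ × ℤ) → A))) : Set ((ℤ × ℤ) → A) :=
  {x | ∀ p ∈ F, ∀ v, ¬ OccursAt p.1 p.2 x v}

/-- The mirror shift over the alphabet `Fin 3 = {0, 1, #}` (with `#` encoded as `2`):
the `#`-symbol propagates vertically, no two `#`'s occur in the same row at distinct
columns, and symbols at equal distances left and right of a `#` agree. -/
def Mirror : Set ((ℤ × ℤ) → Fin 3) :=
  {x | (∀ v : ℤ × ℤ, x v = 2 ↔ x (v + (0, 1)) = 2) ∧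
       (∀ v : ℤ × ℤ, ∀ n : ℤ, 0 < n → ¬ (x v = 2 ∧ x (v + (n, 0)) = 2)) ∧
       (∀ v : ℤ × ℤ, ∀ n : ℤ, 0 < n → x v = 2 → x (v + (-n, 0)) = x (v + (n, 0)))}

namespace MirrorAux

variable (core : Finset (ℤ × ℤ))

/-- The mirror configuration determined by a pattern `Q` on `core` (assumed to lie in
positive columns): a `#`-column at column `0`, `Q` and its mirror image, zeros elsewhere. -/
def conf (Q : {w // w ∈ core} → Fin 2) : (ℤ × ℤ) → Fin 3 :=
  fun w => if w.1 = 0 then 2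
    else if h : (|w.1|, w.2) ∈ core then Fin.castLE (by omega) (Q ⟨(|w.1|, w.2), h⟩) else 0

lemma conf_eq_two_iff (Q : {w // w ∈ core} → Fin 2) (w : ℤ × ℤ) :
    conf core Q w = 2 ↔ w.1 = 0 := by
  constructor
  · intro h
    by_contra h1
    rw [conf] at h
    rw [if_neg h1] at h
    by_cases h2 : (|w.1|, w.2) ∈ core
    · rw [dif_pos h2] at h
      have := congrArg Fin.val h
      simp [Fin.castLE] at this
      omega
    · rw [dif_neg h2] at h
      exact absurd (congrArg Fin.val h) (by simp)
  · intro h1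
    rw [conf, if_pos h1]

lemma conf_fst_zero (Q : {w // w ∈ core} → Fin 2) {w : ℤ × ℤ} (h : w.1 = 0) :
    conf core Q w = 2 := by rw [conf, if_pos h]

lemma conf_apply_core (Q : {w // w ∈ core} → Fin 2) {w : ℤ × ℤ} (h0 : 0 < w.1)
    (hw : w ∈ core) : conf core Q w = Fin.castLE (by omega) (Q ⟨w, hw⟩) := by
  have h1 : w.1 ≠ 0 := by omega
  have habs : |w.1| = w.1 := abs_of_pos h0
  have hmem : (|w.1|, w.2) ∈ core := by rw [habs, Prod.mk.eta]; exact hw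
  rw [conf, if_neg h1, dif_pos hmem]
  have he : (⟨(|w.1|, w.2), hmem⟩ : {w // w ∈ core}) = ⟨w, hw⟩ :=
    Subtype.ext (by show ((|w.1|, w.2) : ℤ × ℤ) = w; rw [habs, Prod.mk.eta])
  exact congrArg (fun u => Fin.castLE (by omega) (Q u)) he

lemma conf_apply_neg (Q : {w // w ∈ core} → Fin 2) {i j : ℤ} (h0 : 0 < i)
    (hw : (i, j) ∈ core) : conf core Q (-i, j) = Fin.castLE (by omega) (Q ⟨(i, j), hw⟩) := by
  have h1 : ((-i : ℤ), j).1 ≠ 0 := by show -i ≠ 0; omega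
  have habs : |(-i : ℤ)| = i := by rw [abs_neg, abs_of_pos h0]
  have hmem : (|((-i : ℤ), j).1|, ((-i : ℤ), j).2) ∈ core := by simpa [habs] using hw
  rw [conf, if_neg h1, dif_pos hmem]
  have he : (⟨(|((-i : ℤ), j).1|, ((-i : ℤ), j).2), hmem⟩ : {w // w ∈ core}) = ⟨(i, j), hw⟩ :=
    Subtype.ext (by show ((|((-i : ℤ), j).1|, ((-i : ℤ), j).2) : ℤ × ℤ) = (i, j); simp [habs])
  exact congrArg (fun u => Fin.castLE (by omega) (Q u)) he

lemma conf_mem (Q : {w // w ∈ core} → Fin 2) :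
    conf core Q ∈ Mirror := by
  refine ⟨?_, ?_, ?_⟩
  · intro v
    rw [conf_eq_two_iff, conf_eq_two_iff]
    simp
  · rintro v n hn ⟨h1, h2⟩
    rw [conf_eq_two_iff] at h1 h2
    simp at h2
    omega
  · intro v n hn hv
    rw [conf_eq_two_iff] at hv
    obtain ⟨i, j⟩ := v
    simp only at hv
    subst hv
    show conf core Q ((0, j) + (-n, 0)) = conf core Q ((0, j) + (n, 0))
    have e1 : ((0 : ℤ), j) + (-n, 0) = (-n, j) := by simp
    have e2 : ((0 : ℤ), j) + (n, 0) = (n, j) := by simp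
    rw [e1, e2, conf, conf]
    have hn1 : ((-n : ℤ), j).1 ≠ 0 := by simp; omega
    have hn2 : ((n : ℤ), j).1 ≠ 0 := by simp; omega
    rw [if_neg hn1, if_neg hn2]
    have habs : |((-n : ℤ), j).1| = |((n : ℤ), j).1| := by simp
    simp only [habs]

end MirrorAux

/-- the mirror shift is not sofic: it is not the image of any SFT
(over any finite alphabet) under a block map. -/
theorem mirror_not_sofic :
    ¬ ∃ (B : Type) (_ : Fintype B)
        (F : Set (Set (ℤ × ℤ) × ((ℤ × ℤ) → B)))
        (f : ((ℤ × ℤ) → B) → ((ℤ × ℤ) → Fin 3))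
        (D : Finset (ℤ × ℤ)) (Floc : ({d // d ∈ D} → B) → Fin 3),
      F.Finite ∧ (∀ p ∈ F, p.1.Finite) ∧
      (∀ x v, f x v = Floc (fun d => x (v + d.1))) ∧
      f '' XF F = Mirror := by
  classical
  rintro ⟨B, hB, F, f, D, Floc, hFfin, hFdom, hf, himg⟩
  haveI := hB
  -- a bound `r` on the domains of the forbidden patterns
  have hUfin : (⋃ p ∈ F, p.1).Finite := Set.Finite.biUnion hFfin fun p hp => hFdom p hp
  obtain ⟨r, hr⟩ : ∃ r : ℕ, ∀ p ∈ F, ∀ w ∈ p.1,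
      -(r : ℤ) ≤ w.1 ∧ w.1 ≤ r ∧ -(r : ℤ) ≤ w.2 ∧ w.2 ≤ r := by
    refine ⟨hUfin.toFinset.sup fun w => (|w.1| ⊔ |w.2|).toNat, ?_⟩
    intro p hp w hw
    have hmem : w ∈ hUfin.toFinset := by
      simp only [Set.Finite.mem_toFinset, Set.mem_iUnion]; exact ⟨p, hp, hw⟩
    have h1 := Finset.le_sup (f := fun w : ℤ × ℤ => (|w.1| ⊔ |w.2|).toNat) hmem
    have h2 := Int.toNat_le.mp h1
    have h3 : |w.1| ≤ |w.1| ⊔ |w.2| := le_sup_left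
    have h4 : |w.2| ≤ |w.1| ⊔ |w.2| := le_sup_right
    have h5 := abs_le.mp (h3.trans h2)
    have h6 := abs_le.mp (h4.trans h2)
    exact ⟨h5.1, h5.2, h6.1, h6.2⟩
  -- a bound `s` on the neighborhood `D`
  obtain ⟨s, hs⟩ : ∃ s : ℕ, ∀ d ∈ D,
      -(s : ℤ) ≤ d.1 ∧ d.1 ≤ s ∧ -(s : ℤ) ≤ d.2 ∧ d.2 ≤ s := by
    refine ⟨D.sup fun d => (|d.1| ⊔ |d.2|).toNat, ?_⟩
    intro d hd
    have h1 := Finset.le_sup (f := fun d : ℤ × ℤ => (|d.1| ⊔ |d.2|).toNat) hd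
    have h2 := Int.toNat_le.mp h1
    have h5 := abs_le.mp ((le_sup_left : |d.1| ≤ _).trans h2)
    have h6 := abs_le.mp ((le_sup_right : |d.2| ≤ _).trans h2)
    exact ⟨h5.1, h5.2, h6.1, h6.2⟩
  set K := Fintype.card B with hK
  set t : ℕ := s + 2 * r + 1 with ht
  set c : ℕ := t + s with hc
  set n : ℕ := 3 * K * (4 * r + 2) + 2 * t + 2 * s + 1 with hn
  set core : Finset (ℤ × ℤ) :=
    Finset.Icc ((c : ℤ) + 1) ((c : ℤ) + n) ×ˢ Finset.Icc (1 : ℤ) (n : ℤ) with hcore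
  set small : Finset (ℤ × ℤ) :=
    Finset.Icc ((c : ℤ) + 1 - s) ((c : ℤ) + n + s) ×ˢ Finset.Icc ((1 : ℤ) - s) ((n : ℤ) + s)
    with hsmall
  set big : Finset (ℤ × ℤ) :=
    Finset.Icc ((c : ℤ) + 1 - t) ((c : ℤ) + n + t) ×ˢ Finset.Icc ((1 : ℤ) - t) ((n : ℤ) + t)
    with hbig
  have hmem_core : ∀ w : ℤ × ℤ, w ∈ core ↔
      ((c : ℤ) + 1 ≤ w.1 ∧ w.1 ≤ c + n ∧ 1 ≤ w.2 ∧ w.2 ≤ n) := by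
    intro w
    rw [hcore, Finset.mem_product, Finset.mem_Icc, Finset.mem_Icc]
    tauto
  have hmem_small : ∀ w : ℤ × ℤ, w ∈ small ↔
      ((c : ℤ) + 1 - s ≤ w.1 ∧ w.1 ≤ c + n + s ∧ 1 - (s : ℤ) ≤ w.2 ∧ w.2 ≤ n + s) := by
    intro w
    rw [hsmall, Finset.mem_product, Finset.mem_Icc, Finset.mem_Icc]
    tauto
  have hmem_big : ∀ w : ℤ × ℤ, w ∈ big ↔
      ((c : ℤ) + 1 - t ≤ w.1 ∧ w.1 ≤ c + n + t ∧ 1 - (t : ℤ) ≤ w.2 ∧ w.2 ≤ n + t) := by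
    intro w
    rw [hbig, Finset.mem_product, Finset.mem_Icc, Finset.mem_Icc]
    tauto
  -- for each pattern `Q`, a preimage point `y Q` in the SFT
  have hy : ∀ Q : {w // w ∈ core} → Fin 2,
      ∃ y, y ∈ XF F ∧ f y = MirrorAux.conf core Q := by
    intro Q
    have h1 : MirrorAux.conf core Q ∈ Mirror := MirrorAux.conf_mem core Q
    rw [← himg] at h1
    obtain ⟨y, hy1, hy2⟩ := h1
    exact ⟨y, hy1, hy2⟩
  choose y hyX hyf using hy
  -- cardinality computations
  have hsub : small ⊆ big := by
    intro w hw
    rw [hmem_small] at hw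
    rw [hmem_big]
    omega
  have hcard_core : core.card = n * n := by
    rw [hcore, Finset.card_product, Int.card_Icc, Int.card_Icc]
    have h1 : ((c : ℤ) + n + 1 - ((c : ℤ) + 1)).toNat = n := by omega
    have h2 : ((n : ℤ) + 1 - 1).toNat = n := by omega
    rw [h1, h2]
  have hcard_big : big.card = (n + 2 * t) * (n + 2 * t) := by
    rw [hbig, Finset.card_product, Int.card_Icc, Int.card_Icc]
    have h1 : ((c : ℤ) + n + t + 1 - ((c : ℤ) + 1 - t)).toNat = n + 2 * t := by omega
    have h2 : ((n : ℤ) + t + 1 - (1 - (t : ℤ))).toNat = n + 2 * t := by omega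
    rw [h1, h2]
  have hcard_small : small.card = (n + 2 * s) * (n + 2 * s) := by
    rw [hsmall, Finset.card_product, Int.card_Icc, Int.card_Icc]
    have h1 : ((c : ℤ) + n + s + 1 - ((c : ℤ) + 1 - s)).toNat = n + 2 * s := by omega
    have h2 : ((n : ℤ) + s + 1 - (1 - (s : ℤ))).toNat = n + 2 * s := by omega
    rw [h1, h2]
  have hframe : (big \ small).card = (n + 2 * t) * (n + 2 * t) - (n + 2 * s) * (n + 2 * s) := by
    rw [Finset.card_sdiff_of_subset hsub, hcard_big, hcard_small]
  have hcount : Fintype.card ({w // w ∈ big \ small} → B) <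
      Fintype.card ({w // w ∈ core} → Fin 2) := by
    rw [Fintype.card_fun, Fintype.card_fun, Fintype.card_coe, Fintype.card_coe, hframe,
      hcard_core, Fintype.card_fin, ← hK]
    have heq : (n + 2 * t) * (n + 2 * t) =
        (n + 2 * s) * (n + 2 * s) + (4 * r + 2) * (2 * n + 2 * t + 2 * s) := by
      rw [ht]; ring
    have hFr : (n + 2 * t) * (n + 2 * t) - (n + 2 * s) * (n + 2 * s) =
        (4 * r + 2) * (2 * n + 2 * t + 2 * s) := by omega
    rw [hFr]
    have hlt : K * ((4 * r + 2) * (2 * n + 2 * t + 2 * s)) < n * n := by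
      rw [hn]
      nlinarith [hn, ht, Nat.zero_le K, Nat.zero_le r, Nat.zero_le s, Nat.zero_le t]
    calc K ^ ((4 * r + 2) * (2 * n + 2 * t + 2 * s))
        ≤ (2 ^ K) ^ ((4 * r + 2) * (2 * n + 2 * t + 2 * s)) :=
          Nat.pow_le_pow_left (Nat.le_of_lt (Nat.lt_two_pow_self (n := K))) _
      _ = 2 ^ (K * ((4 * r + 2) * (2 * n + 2 * t + 2 * s))) := (pow_mul 2 _ _).symm
      _ < 2 ^ (n * n) := Nat.pow_lt_pow_right one_lt_two hlt
  -- pigeonhole: two distinct patterns with SFT preimages agreeing on the frame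
  obtain ⟨Q, Q', hQne, hQeq⟩ := Fintype.exists_ne_map_eq_of_card_lt
    (fun Q : {w // w ∈ core} → Fin 2 => fun w : {w // w ∈ big \ small} => y Q w.1) hcount
  have hagree : ∀ w ∈ big, w ∉ small → y Q w = y Q' w := by
    intro w hw hw2
    exact congrFun hQeq ⟨w, Finset.mem_sdiff.mpr ⟨hw, hw2⟩⟩
  -- the hybrid configuration
  set z : (ℤ × ℤ) → B := fun w => if w ∈ big then y Q' w else y Q w with hz
  have hzX : z ∈ XF F := by
    intro p hp v hocc
    by_cases hcase : ∃ w ∈ p.1, v + w ∈ small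
    · obtain ⟨w0, hw0, hw0s⟩ := hcase
      apply hyX Q' p hp v
      intro w hw
      have hb : v + w ∈ big := by
        have h1 := hr p hp w0 hw0
        have h2 := hr p hp w hw
        have h3 := (hmem_small (v + w0)).mp hw0s
        rw [hmem_big]
        simp only [Prod.fst_add, Prod.snd_add] at h3 ⊢
        omega
      have hzw : z (v + w) = y Q' (v + w) := by rw [hz]; exact if_pos hb
      rw [← hzw]
      exact hocc w hw
    · push_neg at hcase
      apply hyX Q p hp v
      intro w hw
      have hzw : z (v + w) = y Q (v + w) := by
        by_cases hb : v + w ∈ big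
        · rw [hz]
          simp only
          rw [if_pos hb]
          exact (hagree (v + w) hb (hcase w hw)).symm
        · rw [hz]; exact if_neg hb
      rw [← hzw]
      exact hocc w hw
  -- evaluation of `f z` on the left half-plane and on the core
  have hfz_out : ∀ w : ℤ × ℤ, w.1 ≤ 0 → f z w = MirrorAux.conf core Q w := by
    intro w hw
    rw [hf z w, ← hyf Q, hf (y Q) w]
    congr 1
    funext d
    have hd := hs d.1 d.2
    have hnb : w + d.1 ∉ big := by
      rw [hmem_big]
      simp only [Prod.fst_add, Prod.snd_add]
      omega
    show z (w + d.1) = y Q (w + d.1)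
    rw [hz]; exact if_neg hnb
  have hfz_core : ∀ w ∈ core, f z w = MirrorAux.conf core Q' w := by
    intro w hw
    rw [hf z w, ← hyf Q', hf (y Q') w]
    congr 1
    funext d
    have hd := hs d.1 d.2
    have hwc := (hmem_core w).mp hw
    have hb : w + d.1 ∈ big := by
      rw [hmem_big]
      simp only [Prod.fst_add, Prod.snd_add]
      omega
    show z (w + d.1) = y Q' (w + d.1)
    rw [hz]; exact if_pos hb
  -- extract a coordinate where the two patterns differ
  obtain ⟨⟨⟨m, j⟩, humem⟩, hu⟩ : ∃ u : {w // w ∈ core}, Q u ≠ Q' u := by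
    by_contra h
    push_neg at h
    exact hQne (funext h)
  have hub := (hmem_core (m, j)).mp humem
  simp only at hub
  have hm : (0 : ℤ) < m := by omega
  -- f z is in the mirror shift, apply the mirror condition
  have hzM : f z ∈ Mirror := by rw [← himg]; exact ⟨z, hzX, rfl⟩
  obtain ⟨h1M, h2M, h3M⟩ := hzM
  have hzero : f z (0, j) = 2 := by
    rw [hfz_out (0, j) (by norm_num)]
    exact MirrorAux.conf_fst_zero core Q rfl
  have hmir := h3M (0, j) m hm hzero
  have e1 : ((0 : ℤ), j) + (-m, 0) = (-m, j) := by simp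
  have e2 : ((0 : ℤ), j) + (m, 0) = (m, j) := by simp
  rw [e1, e2] at hmir
  rw [hfz_out (-m, j) (by show -m ≤ 0; omega), hfz_core (m, j) humem,
    MirrorAux.conf_apply_neg core Q hm humem,
    MirrorAux.conf_apply_core core Q' hm humem] at hmir
  have hval := congrArg Fin.val hmir
  simp only [Fin.coe_castLE] at hval
  exact hu (Fin.val_injective hval)
end

section
/- Configurations of the mirror shift satisfy the mirror property: if x ∈ M and x(c, r) = # for some column c and row r, then x(c, r') = # for all rows r', and for every n ≥ 1 and every row r', x(c − n, r') = x(c + n, r'). -/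
open Pointwise

/-- configurations of the mirror shift satisfy the mirror property:
a `#` at column `c` forces a whole column of `#`'s at column `c`, and the columns
`c - n` and `c + n` agree in every row, for every `n ≥ 1`. -/
theorem mirror_property (x : (ℤ × ℤ) → Fin 3) (hx : x ∈ Mirror) (c r : ℤ)
    (h : x (c, r) = 2) :
    (∀ r' : ℤ, x (c, r') = 2) ∧
    (∀ n : ℤ, 1 ≤ n → ∀ r' : ℤ, x (c - n, r') = x (c + n, r')) := by
  obtain ⟨h1, h2, h3⟩ := hx
  have col : ∀ k : ℤ, x (c, r + k) = 2 := by
    intro k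
    induction k using Int.induction_on with
    | zero => simpa using h
    | succ n ih =>
        have := (h1 (c, r + n)).mp ih
        simpa [Prod.ext_iff, add_assoc] using this
    | pred n ih =>
        have e : ((c, r + (-(n:ℤ) - 1)) + ((0:ℤ), (1:ℤ))) = (c, r + -(n:ℤ)) := by
          simp [Prod.ext_iff]; ring
        have := (h1 (c, r + (-(n:ℤ) - 1))).mpr (by rw [e]; exact ih)
        simpa using this
  have col' : ∀ r' : ℤ, x (c, r') = 2 := by
    intro r'
    have := col (r' - r)
    simpa using this
  refine ⟨col', fun n hn r' => ?_⟩
  have := h3 (c, r') n (by linarith) (col' r')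
  simpa [Prod.ext_iff, sub_eq_add_neg] using this
end
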